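/- All derivatives of the softplus function are uniformly bounded by factorials: for f(x) = ln(1 + e^{−x}) and every integer k ≥ 2, sup_{x∈ℝ} |f^{(k)}(x)| ≤ (k−1)!. -/

import Mathlib

open Finset

noncomputable def sgm (x : ℝ) : ℝ := (1 + Real.exp (-x))⁻¹

noncomputable def ec : ℕ → ℕ → ℝ
  | 0, _ => 0
  | 1, 0 => -1
  | 1, _ + 1 => 0
  | _ + 2, 0 => 0
  | k + 2, j + 1 => ((j : ℝ) + 1) * ec (k + 1) (j + 1) - ((k + 1 - j : ℕ) : ℝ) * ec (k + 1) j

lemma ec_zero_of_le : ∀ k j : ℕ, k ≤ j → ec k j = 0 := by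
  intro k
  induction k with
  | zero => intro j _; rfl
  | succ k ih =>
    intro j hj
    match k, j, hj with
    | 0, j + 1, _ => rfl
    | k + 1, j + 1, hj =>
      have h1 : ec (k + 1) (j + 1) = 0 := ih (j + 1) (by omega)
      have h2 : (k + 1 - j : ℕ) = 0 := by omega
      simp [ec, h1, h2]

lemma sgm_pos (x : ℝ) : 0 < sgm x := by
  have := Real.exp_pos (-x); unfold sgm; positivity

lemma sgm_lt_one (x : ℝ) : sgm x < 1 := by
  have h := Real.exp_pos (-x)
  have h1 : (1 : ℝ) < 1 + Real.exp (-x) := by linarith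
  have := inv_lt_one_of_one_lt₀ h1
  simpa [sgm] using this

lemma hasDerivAt_sgm (x : ℝ) : HasDerivAt sgm (sgm x * (1 - sgm x)) x := by
  have he : HasDerivAt (fun y : ℝ => Real.exp (-y)) (-Real.exp (-x)) x := by
    have := (Real.hasDerivAt_exp (-x)).comp x (hasDerivAt_neg x)
    simpa [mul_comm, Function.comp_def] using this
  have hd : HasDerivAt (fun y : ℝ => 1 + Real.exp (-y)) (-Real.exp (-x)) x := he.const_add 1
  have hne : (1 : ℝ) + Real.exp (-x) ≠ 0 := by have := Real.exp_pos (-x); positivity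
  have := hd.inv hne
  have heq : -(-Real.exp (-x)) / (1 + Real.exp (-x)) ^ 2 = sgm x * (1 - sgm x) := by
    unfold sgm
    field_simp
    ring
  rw [heq] at this
  exact this

noncomputable def FF (k : ℕ) (x : ℝ) : ℝ :=
  ∑ j ∈ range (k + 1), ec k j * sgm x ^ j * (1 - sgm x) ^ (k - j)

lemma hasDerivAt_softplus (x : ℝ) :
    HasDerivAt (fun x : ℝ => Real.log (1 + Real.exp (-x))) (FF 1 x) x := by
  have he : HasDerivAt (fun y : ℝ => Real.exp (-y)) (-Real.exp (-x)) x := by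
    have := (Real.hasDerivAt_exp (-x)).comp x (hasDerivAt_neg x)
    simpa [mul_comm, Function.comp_def] using this
  have hd : HasDerivAt (fun y : ℝ => 1 + Real.exp (-y)) (-Real.exp (-x)) x := he.const_add 1
  have hne : (1 : ℝ) + Real.exp (-x) ≠ 0 := by have := Real.exp_pos (-x); positivity
  have hl := (Real.hasDerivAt_log hne).comp x hd
  have heq : (1 + Real.exp (-x))⁻¹ * (-Real.exp (-x)) = FF 1 x := by
    unfold FF
    rw [Finset.sum_range_succ, Finset.sum_range_succ, Finset.sum_range_zero]
    show _ = 0 + ec 1 0 * sgm x ^ 0 * (1 - sgm x) ^ 1 + ec 1 1 * sgm x ^ 1 * (1 - sgm x) ^ 0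
    have h1 : ec 1 0 = -1 := rfl
    have h2 : ec 1 1 = 0 := rfl
    unfold sgm
    rw [h1, h2]
    field_simp
    ring
  rw [heq] at hl
  exact hl

lemma hasDerivAt_FF (k : ℕ) (x : ℝ) :
    HasDerivAt (FF (k + 1)) (FF (k + 2) x) x := by
  set K := k + 1 with hK
  set s := sgm x with hs
  -- derivative of each term
  have hsd : HasDerivAt sgm (s * (1 - s)) x := hasDerivAt_sgm x
  have h1ms : HasDerivAt (fun y => 1 - sgm y) (-(s * (1 - s))) x := hsd.const_sub 1
  have hterm : ∀ j : ℕ, HasDerivAt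
      (fun y => ec K j * sgm y ^ j * (1 - sgm y) ^ (K - j))
      ((ec K j * ((j : ℝ) * s ^ (j - 1) * (s * (1 - s)))) * (1 - s) ^ (K - j)
        + (ec K j * s ^ j) *
          (((K - j : ℕ) : ℝ) * (1 - s) ^ (K - j - 1) * (-(s * (1 - s))))) x := by
    intro j
    exact ((hsd.pow j).const_mul (ec K j)).mul (h1ms.pow (K - j))
  have hsum : HasDerivAt (FF K)
      (∑ j ∈ range (K + 1),
        ((ec K j * ((j : ℝ) * s ^ (j - 1) * (s * (1 - s)))) * (1 - s) ^ (K - j)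
        + (ec K j * s ^ j) *
          (((K - j : ℕ) : ℝ) * (1 - s) ^ (K - j - 1) * (-(s * (1 - s)))))) x := by
    exact HasDerivAt.fun_sum fun j _ => hterm j
  -- now the algebraic identity
  have key : (∑ j ∈ range (K + 1),
        ((ec K j * ((j : ℝ) * s ^ (j - 1) * (s * (1 - s)))) * (1 - s) ^ (K - j)
        + (ec K j * s ^ j) *
          (((K - j : ℕ) : ℝ) * (1 - s) ^ (K - j - 1) * (-(s * (1 - s)))))) = FF (K + 1) x := by
    set A : ℕ → ℝ := fun j => ec K j * (j : ℝ) * s ^ j * (1 - s) ^ (K + 1 - j) with hA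
    set B : ℕ → ℝ := fun j => ec K j * ((K - j : ℕ) : ℝ) * s ^ (j + 1) * (1 - s) ^ (K - j) with hB
    have hAB : ∀ j ∈ range (K + 1),
        ((ec K j * ((j : ℝ) * s ^ (j - 1) * (s * (1 - s)))) * (1 - s) ^ (K - j)
        + (ec K j * s ^ j) *
          (((K - j : ℕ) : ℝ) * (1 - s) ^ (K - j - 1) * (-(s * (1 - s))))) = A j - B j := by
      intro j hj
      rw [Finset.mem_range] at hj
      have hjK : j ≤ K := by omega
      have e1 : (ec K j * ((j : ℝ) * s ^ (j - 1) * (s * (1 - s)))) * (1 - s) ^ (K - j) = A j := by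
        rcases j with _ | i
        · simp [hA]
        · have h1 : s ^ (i + 1 - 1) * s = s ^ (i + 1) := by
            rw [Nat.add_sub_cancel, pow_succ]
          have h2 : (1 - s) * (1 - s) ^ (K - (i + 1)) = (1 - s) ^ (K + 1 - (i + 1)) := by
            rw [← pow_succ']
            congr 1
            omega
          rw [hA]
          calc (ec K (i+1) * (((i+1 : ℕ) : ℝ) * s ^ (i + 1 - 1) * (s * (1 - s)))) * (1 - s) ^ (K - (i+1))
              = ec K (i+1) * ((i+1 : ℕ) : ℝ) * (s ^ (i + 1 - 1) * s) * ((1 - s) * (1 - s) ^ (K - (i+1))) := by ring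
            _ = ec K (i+1) * ((i+1 : ℕ) : ℝ) * s ^ (i+1) * (1 - s) ^ (K + 1 - (i+1)) := by rw [h1, h2]
      have e2 : (ec K j * s ^ j) *
          (((K - j : ℕ) : ℝ) * (1 - s) ^ (K - j - 1) * (-(s * (1 - s)))) = -B j := by
        rcases Nat.eq_or_lt_of_le hjK with h | h
        · have : (K - j : ℕ) = 0 := by omega
          simp [hB, this]
        · have h1 : (1 - s) ^ (K - j - 1) * (1 - s) = (1 - s) ^ (K - j) := by
            rw [← pow_succ]
            congr 1
            omega
          have h2 : s ^ j * s = s ^ (j + 1) := by rw [pow_succ]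
          rw [hB]
          calc (ec K j * s ^ j) * (((K - j : ℕ) : ℝ) * (1 - s) ^ (K - j - 1) * (-(s * (1 - s))))
              = -(ec K j * ((K - j : ℕ) : ℝ) * (s ^ j * s) * ((1 - s) ^ (K - j - 1) * (1 - s))) := by ring
            _ = -(ec K j * ((K - j : ℕ) : ℝ) * s ^ (j + 1) * (1 - s) ^ (K - j)) := by rw [h1, h2]
      rw [e1, e2]; ring
    rw [Finset.sum_congr rfl hAB]
    -- RHS manipulation
    have hF : FF (K + 1) x = ∑ j ∈ range (K + 1), (A (j + 1) - B j) := by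
      unfold FF
      rw [Finset.sum_range_succ']
      have h0 : ec (K + 1) 0 * sgm x ^ 0 * (1 - sgm x) ^ (K + 1 - 0) = 0 := by
        have : ec (K + 1) 0 = 0 := by rw [hK]; rfl
        simp [this]
      rw [h0, add_zero]
      refine Finset.sum_congr rfl fun j hj => ?_
      rw [Finset.mem_range] at hj
      have hrec : ec (K + 1) (j + 1)
          = ((j : ℝ) + 1) * ec K (j + 1) - ((K - j : ℕ) : ℝ) * ec K j := by
        rw [hK]; rfl
      have hexp : K + 1 - (j + 1) = K - j := by omega
      have hexp2 : K + 1 - (j + 1) + 1 = K + 1 - j := by omega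
      rw [hrec, hA, hB]
      simp only [← hs, hexp]
      push_cast
      ring
    rw [hF, Finset.sum_sub_distrib, Finset.sum_sub_distrib]
    congr 1
    -- ∑ A j = ∑ A (j+1)
    have h1 : ∑ j ∈ range (K + 2), A j = ∑ j ∈ range (K + 1), A (j + 1) + A 0 :=
      Finset.sum_range_succ' A (K + 1)
    have h2 : ∑ j ∈ range (K + 2), A j = ∑ j ∈ range (K + 1), A j + A (K + 1) :=
      Finset.sum_range_succ A (K + 1)
    have hA0 : A 0 = 0 := by simp [hA]
    have hAtop : A (K + 1) = 0 := by
      have : ec K (K + 1) = 0 := ec_zero_of_le K (K + 1) (by omega)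
      simp [hA, this]
    rw [hA0, add_zero] at h1
    rw [hAtop, add_zero] at h2
    rw [← h1, h2]
  rw [key] at hsum
  exact hsum

lemma iteratedDeriv_softplus_eq (k : ℕ) :
    iteratedDeriv (k + 1) (fun x : ℝ => Real.log (1 + Real.exp (-x))) = FF (k + 1) := by
  induction k with
  | zero =>
    rw [iteratedDeriv_one]
    funext x
    exact (hasDerivAt_softplus x).deriv
  | succ k ih =>
    rw [iteratedDeriv_succ, ih]
    funext x
    exact (hasDerivAt_FF k x).deriv

lemma ec_abs_sum_le (k : ℕ) :
    ∑ j ∈ range (k + 2), |ec (k + 1) j| ≤ (Nat.factorial k : ℝ) := by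
  induction k with
  | zero =>
    rw [Finset.sum_range_succ, Finset.sum_range_succ, Finset.sum_range_zero]
    have h1 : ec 1 0 = -1 := rfl
    have h2 : ec 1 1 = 0 := rfl
    rw [h1, h2]
    norm_num [Nat.factorial]
  | succ k ih =>
    have hsplit : ∑ j ∈ range (k + 3), |ec (k + 2) j|
        = ∑ j ∈ range (k + 2), |ec (k + 2) (j + 1)| + |ec (k + 2) 0| :=
      Finset.sum_range_succ' _ (k + 2)
    have h0 : ec (k + 2) 0 = 0 := rfl
    have hle : ∀ j ∈ range (k + 2), |ec (k + 2) (j + 1)|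
        ≤ ((j : ℝ) + 1) * |ec (k + 1) (j + 1)| + ((k + 1 - j : ℕ) : ℝ) * |ec (k + 1) j| := by
      intro j hj
      have : ec (k + 2) (j + 1)
          = ((j : ℝ) + 1) * ec (k + 1) (j + 1) - ((k + 1 - j : ℕ) : ℝ) * ec (k + 1) j := rfl
      rw [this]
      refine (abs_sub _ _).trans ?_
      rw [abs_mul, abs_mul]
      have hj1 : |((j : ℝ) + 1)| = (j : ℝ) + 1 := abs_of_nonneg (by positivity)
      have hj2 : |(((k + 1 - j : ℕ)) : ℝ)| = ((k + 1 - j : ℕ) : ℝ) := abs_of_nonneg (by positivity)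
      rw [hj1, hj2]
    calc ∑ j ∈ range (k + 3), |ec (k + 2) j|
        = ∑ j ∈ range (k + 2), |ec (k + 2) (j + 1)| := by rw [hsplit, h0]; simp
      _ ≤ ∑ j ∈ range (k + 2), (((j : ℝ) + 1) * |ec (k + 1) (j + 1)|
            + ((k + 1 - j : ℕ) : ℝ) * |ec (k + 1) j|) := Finset.sum_le_sum hle
      _ = ∑ j ∈ range (k + 2), ((j : ℝ) + 1) * |ec (k + 1) (j + 1)|
            + ∑ j ∈ range (k + 2), ((k + 1 - j : ℕ) : ℝ) * |ec (k + 1) j| := by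
          rw [Finset.sum_add_distrib]
      _ = ∑ j ∈ range (k + 2), (j : ℝ) * |ec (k + 1) j|
            + ∑ j ∈ range (k + 2), ((k + 1 - j : ℕ) : ℝ) * |ec (k + 1) j| := by
          congr 1
          have := Finset.sum_range_succ' (fun j => (j : ℝ) * |ec (k + 1) j|) (k + 2)
          have htop := Finset.sum_range_succ (fun j => (j : ℝ) * |ec (k + 1) j|) (k + 2)
          have hz : ec (k + 1) (k + 2) = 0 := ec_zero_of_le _ _ (by omega)
          simp only [hz, abs_zero, mul_zero, add_zero] at htop
          simp only [Nat.cast_zero, zero_mul, add_zero, Nat.cast_add, Nat.cast_one] at this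
          rw [← this, htop]
      _ = ∑ j ∈ range (k + 2), ((k : ℝ) + 1) * |ec (k + 1) j| := by
          rw [← Finset.sum_add_distrib]
          refine Finset.sum_congr rfl fun j hj => ?_
          rw [Finset.mem_range] at hj
          have : ((k + 1 - j : ℕ) : ℝ) = (k : ℝ) + 1 - (j : ℝ) := by
            have hjle : j ≤ k + 1 := by omega
            push_cast [Nat.cast_sub hjle]
            ring
          rw [this]; ring
      _ = ((k : ℝ) + 1) * ∑ j ∈ range (k + 2), |ec (k + 1) j| := by
          rw [Finset.mul_sum]
      _ ≤ ((k : ℝ) + 1) * (Nat.factorial k : ℝ) := by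
          refine mul_le_mul_of_nonneg_left ih (by positivity)
      _ = (Nat.factorial (k + 1) : ℝ) := by
          rw [Nat.factorial_succ]; push_cast; ring

theorem softplus_deriv_factorial_bound (k : ℕ) (hk : 2 ≤ k) (x : ℝ) :
    |iteratedDeriv k (fun x : ℝ => Real.log (1 + Real.exp (-x))) x| ≤
      (Nat.factorial (k - 1) : ℝ) := by
  obtain ⟨K, rfl⟩ : ∃ K, k = K + 1 := ⟨k - 1, by omega⟩
  rw [iteratedDeriv_softplus_eq K]
  have hs0 : 0 ≤ sgm x := (sgm_pos x).le
  have hs1 : sgm x ≤ 1 := (sgm_lt_one x).le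
  have h1ms0 : 0 ≤ 1 - sgm x := by linarith
  have h1ms1 : 1 - sgm x ≤ 1 := by linarith
  calc |FF (K + 1) x|
      ≤ ∑ j ∈ range (K + 2), |ec (K + 1) j * sgm x ^ j * (1 - sgm x) ^ (K + 1 - j)| :=
        Finset.abs_sum_le_sum_abs _ _
    _ ≤ ∑ j ∈ range (K + 2), |ec (K + 1) j| := by
        refine Finset.sum_le_sum fun j _ => ?_
        rw [abs_mul, abs_mul]
        have hp1 : |sgm x ^ j| ≤ 1 := by
          rw [abs_pow, abs_of_nonneg hs0]
          exact pow_le_one₀ hs0 hs1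
        have hp2 : |(1 - sgm x) ^ (K + 1 - j)| ≤ 1 := by
          rw [abs_pow, abs_of_nonneg h1ms0]
          exact pow_le_one₀ h1ms0 h1ms1
        calc |ec (K + 1) j| * |sgm x ^ j| * |(1 - sgm x) ^ (K + 1 - j)|
            ≤ |ec (K + 1) j| * 1 * 1 := by
              apply mul_le_mul (mul_le_mul le_rfl hp1 (abs_nonneg _) (abs_nonneg _)) hp2
                (abs_nonneg _) (by positivity)
          _ = |ec (K + 1) j| := by ring
    _ ≤ (Nat.factorial K : ℝ) := ec_abs_sum_le K
    _ = (Nat.factorial (K + 1 - 1) : ℝ) := by norm_num
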